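/- Let 1 ≤ p < q ≤ ∞ with 1/p = 1/q + 1/s, and let σ = (σ_k)_{k≥1} be a non-increasing sequence of positive real numbers with σ_k → 0. Then there exists a constant C > 0 such that for all n ≥ 1 the n-th entropy number of the diagonal operator D_σ : ℓ_p → ℓ_q satisfies e_n(D_σ) ≤ C · sup_{k≥1} k^{-1/s} · ( (σ_1 + k^{1/s} σ_k)·(σ_2 + k^{1/s} σ_k)·…·(σ_k + k^{1/s} σ_k) / n )^{1/k}. -/

import Mathlib

open Metric Filter
open scoped ENNReal

/-- The `n`-th (inner) entropy number of a set `T` in a normed space: the infimum of all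
`ε > 0` such that `T` can be covered by `n` closed balls of radius `ε`. -/
noncomputable def entropyNumber {Y : Type*} [SeminormedAddCommGroup Y]
    (n : ℕ) (T : Set Y) : ℝ :=
  sInf {ε : ℝ | 0 < ε ∧ ∃ y : Fin n → Y, T ⊆ ⋃ i, Metric.closedBall (y i) ε}

open scoped NNReal

lemma aux_entropy_le {Y : Type*} [SeminormedAddCommGroup Y] (n : ℕ) (hn : 1 ≤ n)
    (T : Set Y) (ρ : ℝ) (hρ : 0 < ρ) (s : Finset Y) (hcard : s.card ≤ n)
    (hcover : T ⊆ ⋃ y ∈ s, Metric.closedBall y ρ) :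
    entropyNumber n T ≤ ρ := by
  classical
  apply csInf_le ⟨0, fun ε hε => hε.1.le⟩
  refine ⟨hρ, ?_⟩
  have e : ↥s ≃ Fin s.card := s.equivFin
  refine ⟨fun i => if h : (i : ℕ) < s.card then (e.symm ⟨i, h⟩ : Y) else 0, ?_⟩
  intro z hz
  obtain ⟨y, hy, hzy⟩ := Set.mem_iUnion₂.1 (hcover hz)
  have hidx : ((e ⟨y, hy⟩ : Fin s.card) : ℕ) < n := lt_of_lt_of_le (Fin.is_lt _) hcard
  refine Set.mem_iUnion.2 ⟨⟨((e ⟨y, hy⟩ : Fin s.card) : ℕ), hidx⟩, ?_⟩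
  simp only [Fin.val_mk, dif_pos (Fin.is_lt (e ⟨y, hy⟩)), Fin.eta, Equiv.symm_apply_apply]
  exact hzy

lemma aux_holder (d : ℕ) (hd : 1 ≤ d) {pR : ℝ} (hp : 1 ≤ pR) (z : Fin d → ℝ)
    (hz : ∀ i, 0 ≤ z i) :
    ∑ i, z i ≤ (d : ℝ) ^ (1 - 1/pR) * (∑ i, z i ^ pR) ^ (1/pR) := by
  have hd0 : (0:ℝ) < d := by exact_mod_cast hd
  have h := Real.arith_mean_le_rpow_mean Finset.univ (fun _ => (d:ℝ)⁻¹) z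
    (fun i _ => by positivity) (by simp [Finset.card_univ]; field_simp) (fun i _ => hz i) hp
  have h1 : ∑ i, (d:ℝ)⁻¹ * z i = (d:ℝ)⁻¹ * ∑ i, z i := by rw [Finset.mul_sum]
  have h2 : ∑ i, (d:ℝ)⁻¹ * z i ^ pR = (d:ℝ)⁻¹ * ∑ i, z i ^ pR := by rw [Finset.mul_sum]
  rw [h1, h2] at h
  have hpos : (0:ℝ) < pR := lt_of_lt_of_le one_pos hp
  have hsum : (0:ℝ) ≤ ∑ i, z i ^ pR := Finset.sum_nonneg fun i _ => Real.rpow_nonneg (hz i) _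
  calc ∑ i, z i = (d:ℝ) * ((d:ℝ)⁻¹ * ∑ i, z i) := by field_simp
    _ ≤ (d:ℝ) * (((d:ℝ)⁻¹ * ∑ i, z i ^ pR) ^ (1/pR)) := by
        apply mul_le_mul_of_nonneg_left h hd0.le
    _ = (d:ℝ) * (((d:ℝ)⁻¹) ^ (1/pR) * (∑ i, z i ^ pR) ^ (1/pR)) := by
        rw [Real.mul_rpow (by positivity) hsum]
    _ = ((d:ℝ) * ((d:ℝ)⁻¹) ^ (1/pR)) * (∑ i, z i ^ pR) ^ (1/pR) := by ring
    _ = (d : ℝ) ^ (1 - 1/pR) * (∑ i, z i ^ pR) ^ (1/pR) := by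
        congr 1
        rw [Real.rpow_sub hd0, Real.rpow_one, ← Real.rpow_neg_one,
          ← Real.rpow_mul hd0.le, neg_one_mul, Real.rpow_neg hd0.le]
        ring


lemma aux_geom (a : ℝ) (ha : 0 < a) (N : ℕ) :
    ∑ j ∈ Finset.range N, Real.exp (-a) ^ j ≤ 1 + 1/a := by
  have hr0 : (0:ℝ) ≤ Real.exp (-a) := (Real.exp_pos _).le
  have hr1 : Real.exp (-a) < 1 := by
    rw [Real.exp_lt_one_iff]; linarith
  calc ∑ j ∈ Finset.range N, Real.exp (-a) ^ j
      ≤ ∑' j : ℕ, Real.exp (-a) ^ j := by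
        apply Summable.sum_le_tsum _ (fun i _ => pow_nonneg hr0 _)
        exact summable_geometric_of_lt_one hr0 hr1
    _ = (1 - Real.exp (-a))⁻¹ := tsum_geometric_of_lt_one hr0 hr1
    _ ≤ 1 + 1/a := by
        have h1 : a + 1 ≤ Real.exp a := Real.add_one_le_exp a
        have h2 : Real.exp (-a) ≤ 1/(a+1) := by
          rw [Real.exp_neg, one_div]
          exact inv_anti₀ (by linarith) h1
        have h3 : 1/(a+1) < 1 := by rw [div_lt_one (by linarith)]; linarith
        have h4 : 0 < 1 - Real.exp (-a) := by linarith
        have h5 : 1 - 1/(a+1) ≤ 1 - Real.exp (-a) := by linarith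
        calc (1 - Real.exp (-a))⁻¹ ≤ (1 - 1/(a+1))⁻¹ := by
              exact inv_anti₀ (by linarith) h5
          _ = 1 + 1/a := by
              rw [show 1 - 1/(a+1) = a/(a+1) by field_simp; ring, inv_div]
              field_simp

lemma aux_axis (a : ℝ) (ha : 0 < a) (K : ℤ) :
    ∑ z ∈ Finset.Icc (-K) K, Real.exp (-(a * (((|z| - 1).toNat : ℕ) : ℝ)))
      ≤ 6 * (1 + 1/a) := by
  classical
  set h : ℤ → ℝ := fun z => Real.exp (-(a * (((|z| - 1).toNat : ℕ) : ℝ))) with hh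
  have hnonneg : ∀ z, 0 ≤ h z := fun z => (Real.exp_pos _).le
  set N : ℕ := K.toNat + 1 with hN
  set s1 : Finset ℤ := (Finset.range N).image (fun j : ℕ => (j : ℤ)) with hs1
  set s2 : Finset ℤ := (Finset.range N).image (fun j : ℕ => -(j : ℤ)) with hs2
  have hsub : Finset.Icc (-K) K ⊆ s1 ∪ s2 := by
    intro z hz
    rw [Finset.mem_Icc] at hz
    rcases le_or_gt 0 z with hz0 | hz0
    · apply Finset.mem_union_left
      rw [hs1, Finset.mem_image]
      refine ⟨z.toNat, ?_, by omega⟩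
      rw [Finset.mem_range]; omega
    · apply Finset.mem_union_right
      rw [hs2, Finset.mem_image]
      refine ⟨(-z).toNat, ?_, by omega⟩
      rw [Finset.mem_range]; omega
  have key : ∀ N' : ℕ, ∑ j ∈ Finset.range N', h (j : ℤ) ≤ 1 + (1 + 1/a) := by
    intro N'
    cases N' with
    | zero => simp; positivity
    | succ M =>
      rw [Finset.sum_range_succ']
      have h0 : h ((0:ℕ) : ℤ) = 1 := by simp [hh]
      have hstep : ∀ i : ℕ, h ((i+1 : ℕ) : ℤ) = Real.exp (-a) ^ i := by
        intro i
        have habs : |((i+1:ℕ):ℤ)| = (i:ℤ) + 1 := by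
          rw [abs_of_nonneg (by positivity)]; push_cast; ring
        have : ((|((i+1:ℕ):ℤ)| - 1).toNat : ℕ) = i := by rw [habs]; omega
        rw [hh]
        simp only [this]
        rw [← Real.exp_nat_mul]
        congr 1
        push_cast
        ring
      calc (∑ i ∈ Finset.range M, h ((i+1 : ℕ) : ℤ)) + h ((0:ℕ):ℤ)
          = (∑ i ∈ Finset.range M, Real.exp (-a) ^ i) + 1 := by
            rw [h0]; congr 1; exact Finset.sum_congr rfl fun i _ => hstep i
        _ ≤ (1 + 1/a) + 1 := by
            have := aux_geom a ha M; linarith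
        _ = 1 + (1 + 1/a) := by ring
  have hs1sum : ∑ z ∈ s1, h z ≤ 1 + (1 + 1/a) := by
    rw [hs1, Finset.sum_image (by intro x _ y _ hxy; simp only at hxy; exact_mod_cast hxy)]
    exact key N
  have hs2sum : ∑ z ∈ s2, h z ≤ 1 + (1 + 1/a) := by
    rw [hs2, Finset.sum_image (by intro x _ y _ hxy; simp only at hxy; omega)]
    have : ∀ j : ℕ, h (-(j:ℤ)) = h (j:ℤ) := by
      intro j; rw [hh]; simp [abs_neg]
    rw [Finset.sum_congr rfl fun j _ => this j]
    exact key N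
  have hunion : ∑ z ∈ s1 ∪ s2, h z ≤ ∑ z ∈ s1, h z + ∑ z ∈ s2, h z := by
    have := Finset.sum_union_inter (s₁ := s1) (s₂ := s2) (f := h)
    have hinter : 0 ≤ ∑ z ∈ s1 ∩ s2, h z := Finset.sum_nonneg fun z _ => hnonneg z
    linarith
  have hmain : ∑ z ∈ Finset.Icc (-K) K, h z ≤ ∑ z ∈ s1 ∪ s2, h z :=
    Finset.sum_le_sum_of_subset_of_nonneg hsub (fun z _ _ => hnonneg z)
  have ha' : 0 < 1/a := by positivity
  calc ∑ z ∈ Finset.Icc (-K) K, h z ≤ ∑ z ∈ s1, h z + ∑ z ∈ s2, h z := le_trans hmain hunion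
    _ ≤ 2 * (2 + 1/a) := by linarith
    _ ≤ 6 * (1 + 1/a) := by linarith

lemma aux_count (d : ℕ) (hd : 1 ≤ d) (b : Fin d → ℝ) (hb : ∀ i, 0 < b i)
    (M : Finset (Fin d → ℤ))
    (hM : ∀ m ∈ M, ∑ i, (((|m i| - 1).toNat : ℕ) : ℝ) * b i ≤ 1) :
    (M.card : ℝ) ≤ ∏ i, (6 * Real.exp 1 * (1 + 1 / (d * b i))) := by
  classical
  set t : ℤ → ℕ := fun z => (|z| - 1).toNat with ht
  set K : Fin d → ℤ := fun i => 1 + ⌈1 / b i⌉ with hK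
  set box : Finset (Fin d → ℤ) := Fintype.piFinset (fun i => Finset.Icc (-(K i)) (K i))
    with hbox
  have hMbox : M ⊆ box := by
    intro m hm
    rw [hbox, Fintype.mem_piFinset]
    intro i
    have h1 : ((t (m i)) : ℝ) * b i ≤ 1 := by
      refine le_trans ?_ (hM m hm)
      apply Finset.single_le_sum (f := fun j => ((t (m j) : ℕ) : ℝ) * b j)
        (fun j _ => mul_nonneg (by positivity) (hb j).le) (Finset.mem_univ i)
    have h2 : ((t (m i)) : ℝ) ≤ 1 / b i := by
      rw [le_div_iff₀ (hb i)]; exact h1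
    have h3 : ((t (m i)) : ℤ) ≤ ⌈1 / b i⌉ := by
      have := le_trans h2 (Int.le_ceil (1 / b i))
      exact_mod_cast this
    rw [Finset.mem_Icc]
    have hceil : (0:ℤ) ≤ ⌈1 / b i⌉ :=
      Int.ceil_nonneg (div_pos one_pos (hb i)).le
    rw [ht] at h3
    simp only at h3
    rw [Int.abs_eq_natAbs] at h3
    simp only [hK]
    omega
  have hw1 : ∀ m ∈ M, (1:ℝ) ≤ ∏ i, Real.exp (1 - (d : ℝ) * b i * (t (m i) : ℕ)) := by
    intro m hm
    rw [← Real.exp_sum]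
    have key : (0:ℝ) ≤ ∑ i, (1 - (d : ℝ) * b i * (t (m i) : ℕ)) := by
      have heq : ∑ i, (1 - (d : ℝ) * b i * (t (m i) : ℕ)) =
          (d : ℝ) - (d : ℝ) * ∑ i, ((t (m i) : ℕ) : ℝ) * b i := by
        rw [Finset.sum_sub_distrib, Finset.sum_const, Finset.card_univ, Fintype.card_fin,
          Finset.mul_sum]
        congr 1
        · simp [nsmul_eq_mul]
        · congr 1; funext i; ring
      rw [heq]
      have := hM m hm
      have hd0 : (0:ℝ) ≤ d := by positivity
      nlinarith
    calc (1:ℝ) = Real.exp 0 := by simp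
      _ ≤ _ := Real.exp_le_exp.2 key
  have hcard : (M.card : ℝ) ≤ ∑ m ∈ M, ∏ i, Real.exp (1 - (d : ℝ) * b i * (t (m i) : ℕ)) := by
    rw [Finset.card_eq_sum_ones M]
    push_cast
    exact Finset.sum_le_sum hw1
  have hsub : ∑ m ∈ M, ∏ i, Real.exp (1 - (d : ℝ) * b i * (t (m i) : ℕ))
      ≤ ∑ m ∈ box, ∏ i, Real.exp (1 - (d : ℝ) * b i * (t (m i) : ℕ)) := by
    apply Finset.sum_le_sum_of_subset_of_nonneg hMbox
    intro m _ _
    exact Finset.prod_nonneg fun i _ => (Real.exp_pos _).le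
  have hfact : ∑ m ∈ box, ∏ i, Real.exp (1 - (d : ℝ) * b i * (t (m i) : ℕ))
      = ∏ i, ∑ z ∈ Finset.Icc (-(K i)) (K i), Real.exp (1 - (d : ℝ) * b i * (t z : ℕ)) := by
    rw [hbox]
    exact (Finset.prod_univ_sum (fun i => Finset.Icc (-(K i)) (K i))
      (fun i z => Real.exp (1 - (d:ℝ) * b i * (t z : ℕ)))).symm
  have haxis : ∀ i, ∑ z ∈ Finset.Icc (-(K i)) (K i), Real.exp (1 - (d : ℝ) * b i * (t z : ℕ))
      ≤ 6 * Real.exp 1 * (1 + 1 / ((d:ℝ) * b i)) := by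
    intro i
    have ha : (0:ℝ) < (d:ℝ) * b i :=
      mul_pos (by exact_mod_cast hd : (0:ℝ) < (d:ℝ)) (hb i)
    have : ∀ z : ℤ, Real.exp (1 - (d : ℝ) * b i * (t z : ℕ))
        = Real.exp 1 * Real.exp (-((d:ℝ) * b i * (t z : ℕ))) := by
      intro z; rw [sub_eq_add_neg, Real.exp_add]
    rw [Finset.sum_congr rfl fun z _ => this z, ← Finset.mul_sum]
    rw [mul_comm (6:ℝ) (Real.exp 1), mul_assoc]
    apply mul_le_mul_of_nonneg_left _ (Real.exp_pos 1).le
    exact aux_axis ((d:ℝ) * b i) ha (K i)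
  calc (M.card : ℝ) ≤ ∑ m ∈ box, ∏ i, Real.exp (1 - (d : ℝ) * b i * (t (m i) : ℕ)) :=
        le_trans hcard hsub
    _ = ∏ i, ∑ z ∈ Finset.Icc (-(K i)) (K i), Real.exp (1 - (d : ℝ) * b i * (t z : ℕ)) := hfact
    _ ≤ ∏ i, (6 * Real.exp 1 * (1 + 1 / (d * b i))) := by
        apply Finset.prod_le_prod
        · intro i _
          exact Finset.sum_nonneg fun z _ => (Real.exp_pos _).le
        · intro i _; exact haxis i


lemma aux_rpow_add {A B e : ℝ} (hA : 0 ≤ A) (hB : 0 ≤ B) (he : 0 ≤ e) (he1 : e ≤ 1) :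
    (A + B) ^ e ≤ A ^ e + B ^ e := by
  have h := NNReal.rpow_add_le_add_rpow A.toNNReal B.toNNReal he he1
  have hcoe : ((A.toNNReal + B.toNNReal : ℝ≥0) : ℝ) = A + B := by
    push_cast
    rw [Real.coe_toNNReal _ hA, Real.coe_toNNReal _ hB]
  calc (A+B)^e = (((A.toNNReal + B.toNNReal : ℝ≥0) : ℝ)) ^ e := by rw [hcoe]
    _ = (((A.toNNReal + B.toNNReal) ^ e : ℝ≥0) : ℝ) := by rw [← NNReal.coe_rpow]
    _ ≤ ((A.toNNReal ^ e + B.toNNReal ^ e : ℝ≥0) : ℝ) := by exact_mod_cast h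
    _ = A ^ e + B ^ e := by
        push_cast
        rw [Real.coe_toNNReal _ hA, Real.coe_toNNReal _ hB]

lemma aux_memℓp (q : ℝ≥0∞) (hq : 1 ≤ q) (f : ℕ → ℝ) (d : ℕ)
    (hf : ∀ i, d ≤ i → f i = 0) : Memℓp f q := by
  by_cases hqt : q = ∞
  · subst hqt
    apply memℓp_infty
    apply Set.Finite.bddAbove
    have hsub : (Set.range fun i => ‖f i‖) ⊆ insert 0 ((fun i => ‖f i‖) '' Set.Iio d) := by
      rintro - ⟨i, rfl⟩
      rcases lt_or_ge i d with h | h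
      · exact Set.mem_insert_of_mem _ ⟨i, h, rfl⟩
      · show ‖f i‖ ∈ _
        rw [hf i h]; simp
    exact Set.Finite.subset (Set.Finite.insert _ ((Set.finite_Iio d).image _)) hsub
  · have hq0 : 0 < q.toReal := by
      apply ENNReal.toReal_pos _ hqt
      intro h0; rw [h0] at hq; exact absurd hq (by simp)
    apply memℓp_gen
    apply summable_of_ne_finset_zero (s := Finset.range d)
    intro i hi
    rw [hf i (by simpa using hi)]
    simp [Real.zero_rpow hq0.ne']

lemma aux_norm_le (p q : ℝ≥0∞) [hp : Fact (1 ≤ p)] [hq : Fact (1 ≤ q)]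
    (hpt : p ≠ ∞) (hpq : p ≤ q)
    (x : lp (fun _ : ℕ => ℝ) p) (hx : ‖x‖ ≤ 1)
    (g : lp (fun _ : ℕ => ℝ) q) (d : ℕ) (δ τ : ℝ) (hδ : 0 ≤ δ) (hτ : 0 ≤ τ)
    (hhead : ∀ i, i < d → |g i| ≤ δ) (htail : ∀ i, d ≤ i → |g i| ≤ τ * |x i|) :
    ‖g‖ ≤ δ * (d : ℝ) ^ (1/q).toReal + τ := by
  have hp0 : p ≠ 0 := by
    intro h; rw [h] at hp; exact absurd hp.out (by simp)
  have hxi : ∀ i, |x i| ≤ 1 := by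
    intro i
    have := lp.norm_apply_le_norm hp0 x i
    rw [Real.norm_eq_abs] at this
    exact le_trans this hx
  have hpR1 : 1 ≤ p.toReal := by
    have := ENNReal.toReal_mono hpt hp.out
    simpa using this
  have hpR0 : 0 < p.toReal := lt_of_lt_of_le one_pos hpR1
  by_cases hqt : q = ∞
  · subst hqt
    simp only [one_div, ENNReal.inv_top, ENNReal.toReal_zero, Real.rpow_zero, mul_one]
    rw [lp.norm_eq_ciSup]
    apply ciSup_le
    intro i
    rw [Real.norm_eq_abs]
    rcases lt_or_ge i d with h | h
    · linarith [hhead i h]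
    · have := htail i h
      nlinarith [hxi i, abs_nonneg (x i), abs_nonneg ((g : ∀ _ : ℕ, ℝ) i)]
  · have hqR1 : 1 ≤ q.toReal := by
      have := ENNReal.toReal_mono hqt hq.out
      simpa using this
    have hqR0 : 0 < q.toReal := lt_of_lt_of_le one_pos hqR1
    have hpqR : p.toReal ≤ q.toReal := ENNReal.toReal_mono hqt hpq
    set qR := q.toReal with hqR
    -- summability facts
    have hxsum : Summable fun i => |x i| ^ p.toReal := by
      have := lp.memℓp x
      rw [memℓp_gen_iff hpR0] at this
      simpa [Real.norm_eq_abs] using this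
    have hxq_le : ∀ i, |x i| ^ qR ≤ |x i| ^ p.toReal := by
      intro i
      rcases eq_or_lt_of_le (abs_nonneg (x i)) with h0 | h0
      · rw [← h0, Real.zero_rpow hqR0.ne', Real.zero_rpow hpR0.ne']
      · exact Real.rpow_le_rpow_of_exponent_ge h0 (hxi i) hpqR
    have hxqsum : Summable fun i => |x i| ^ qR :=
      Summable.of_nonneg_of_le (fun i => Real.rpow_nonneg (abs_nonneg _) _) hxq_le hxsum
    have hxq1 : ∑' i, |x i| ^ qR ≤ 1 := by
      have h1 : ∑' i, |x i| ^ qR ≤ ∑' i, |x i| ^ p.toReal := Summable.tsum_le_tsum hxq_le hxqsum hxsum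
      have h2 : ∑' i, |x i| ^ p.toReal = ‖x‖ ^ p.toReal := by
        have habs : (fun i => |x i| ^ p.toReal) = fun i => ‖(x : ∀ _ : ℕ, ℝ) i‖ ^ p.toReal := by
          funext i; rw [Real.norm_eq_abs]
        rw [habs, lp.norm_eq_tsum_rpow hpR0 x, ← Real.rpow_mul
          (tsum_nonneg fun i => Real.rpow_nonneg (norm_nonneg _) _)]
        rw [one_div, inv_mul_cancel₀ hpR0.ne', Real.rpow_one]
      rw [h2] at h1
      exact le_trans h1 (Real.rpow_le_one (norm_nonneg x) hx hpR0.le)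
    -- the bounding function
    set F : ℕ → ℝ := fun i => if i < d then δ^qR else (τ * |x i|)^qR with hF
    have hgF : ∀ i, ‖(g : ∀ _ : ℕ, ℝ) i‖ ^ qR ≤ F i := by
      intro i
      rw [Real.norm_eq_abs, hF]
      rcases lt_or_ge i d with h | h
      · simp only [if_pos h]
        exact Real.rpow_le_rpow (abs_nonneg _) (hhead i h) hqR0.le
      · simp only [if_neg (not_lt.2 h)]
        exact Real.rpow_le_rpow (abs_nonneg _) (htail i h) hqR0.le
    have hbase : Summable fun i => (τ * |x i|)^qR := by
      have : (fun i => (τ * |x i|)^qR) = fun i => τ^qR * |x i|^qR := by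
        funext i; rw [Real.mul_rpow hτ (abs_nonneg _)]
      rw [this]
      exact hxqsum.mul_left _
    have hFsum : Summable F := by
      have hdiff : Summable fun i => (if i < d then δ^qR - (τ * |x i|)^qR else 0) := by
        apply summable_of_ne_finset_zero (s := Finset.range d)
        intro i hi
        rw [if_neg (by simpa using hi)]
      exact (hdiff.add hbase).congr
        (fun i => by by_cases h : i < d <;> simp [hF, h])
    have hgsum : Summable fun i => ‖(g : ∀ _ : ℕ, ℝ) i‖ ^ qR := by
      have := lp.memℓp g
      rw [memℓp_gen_iff hqR0] at this
      exact this
    have hS : ∑' i, ‖(g : ∀ _ : ℕ, ℝ) i‖ ^ qR ≤ (d : ℝ) * δ^qR + τ^qR := by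
      have h1 : ∑' i, ‖(g : ∀ _ : ℕ, ℝ) i‖ ^ qR ≤ ∑' i, F i := Summable.tsum_le_tsum hgF hgsum hFsum
      have hdiff : Summable fun i => (if i < d then δ^qR - (τ * |x i|)^qR else 0) := by
        apply summable_of_ne_finset_zero (s := Finset.range d)
        intro i hi
        rw [if_neg (by simpa using hi)]
      have h2 : ∑' i, F i = (∑' i, (if i < d then δ^qR - (τ * |x i|)^qR else 0)) +
          ∑' i, (τ * |x i|)^qR := by
        calc ∑' i, F i
            = ∑' i, ((if i < d then δ^qR - (τ * |x i|)^qR else 0) + (τ * |x i|)^qR) := by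
              apply tsum_congr; intro i; by_cases h : i < d <;> simp [hF, h]
          _ = _ := Summable.tsum_add hdiff hbase
      have h3 : ∑' i, (if i < d then δ^qR - (τ * |x i|)^qR else 0)
          = ∑ i ∈ Finset.range d, (δ^qR - (τ * |x i|)^qR) := by
        rw [tsum_eq_sum (s := Finset.range d) (fun i hi => by rw [if_neg (by simpa using hi)])]
        apply Finset.sum_congr rfl
        intro i hi
        rw [if_pos (by simpa using hi)]
      have h4 : ∑ i ∈ Finset.range d, (δ^qR - (τ * |x i|)^qR) ≤ (d:ℝ) * δ^qR := by
        calc ∑ i ∈ Finset.range d, (δ^qR - (τ * |x i|)^qR)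
            ≤ ∑ i ∈ Finset.range d, δ^qR := by
              apply Finset.sum_le_sum
              intro i _
              have : 0 ≤ (τ * |x i|)^qR := Real.rpow_nonneg (by positivity) _
              linarith
          _ = (d:ℝ) * δ^qR := by
              rw [Finset.sum_const, Finset.card_range, nsmul_eq_mul]
      have h5 : ∑' i, (τ * |x i|)^qR ≤ τ^qR := by
        have heq : ∑' i, (τ * |x i|)^qR = τ^qR * ∑' i, |x i|^qR := by
          rw [← tsum_mul_left]
          congr 1
          funext i
          rw [Real.mul_rpow hτ (abs_nonneg _)]
        rw [heq]
        calc τ^qR * ∑' i, |x i|^qR ≤ τ^qR * 1 :=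
              mul_le_mul_of_nonneg_left hxq1 (Real.rpow_nonneg hτ _)
          _ = τ^qR := mul_one _
      calc ∑' i, ‖(g : ∀ _ : ℕ, ℝ) i‖ ^ qR ≤ ∑' i, F i := h1
        _ = _ + _ := h2
        _ ≤ (d:ℝ) * δ^qR + τ^qR := by rw [h3]; exact add_le_add h4 h5
    -- conclude
    have hnorm : ‖g‖ = (∑' i, ‖(g : ∀ _ : ℕ, ℝ) i‖ ^ qR) ^ (1/qR) :=
      lp.norm_eq_tsum_rpow hqR0 g
    have hSnonneg : 0 ≤ ∑' i, ‖(g : ∀ _ : ℕ, ℝ) i‖ ^ qR :=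
      tsum_nonneg fun i => Real.rpow_nonneg (norm_nonneg _) _
    have hfinal : ‖g‖ ≤ ((d : ℝ) * δ^qR + τ^qR) ^ (1/qR) := by
      rw [hnorm]
      exact Real.rpow_le_rpow hSnonneg hS (by positivity)
    have hsplit : ((d : ℝ) * δ^qR + τ^qR) ^ (1/qR) ≤ δ * (d:ℝ) ^ (1/qR) + τ := by
      have hd0 : (0:ℝ) ≤ (d:ℝ) * δ^qR := by positivity
      have ht0 : (0:ℝ) ≤ τ^qR := Real.rpow_nonneg hτ _
      have h6 := aux_rpow_add hd0 ht0 (by positivity : (0:ℝ) ≤ 1/qR)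
        (by rw [div_le_one hqR0]; linarith)
      have h7 : ((d:ℝ) * δ^qR) ^ (1/qR) = (d:ℝ)^(1/qR) * δ := by
        rw [Real.mul_rpow (by positivity) (Real.rpow_nonneg hδ _),
          ← Real.rpow_mul hδ, mul_one_div, div_self hqR0.ne', Real.rpow_one]
      have h8 : (τ^qR) ^ (1/qR) = τ := by
        rw [← Real.rpow_mul hτ, mul_one_div, div_self hqR0.ne', Real.rpow_one]
      calc ((d : ℝ) * δ^qR + τ^qR) ^ (1/qR) ≤ ((d:ℝ) * δ^qR)^(1/qR) + (τ^qR)^(1/qR) := h6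
        _ = δ * (d:ℝ)^(1/qR) + τ := by rw [h7, h8]; ring
    have hq1 : (1/q).toReal = 1/qR := by
      rw [one_div, ENNReal.toReal_inv, hqR, one_div]
    rw [hq1]
    exact le_trans hfinal hsplit


lemma aux_floor_abs (v : ℝ) : (((|⌊v⌋| - 1).toNat : ℕ) : ℝ) ≤ |v| := by
  rcases lt_trichotomy ⌊v⌋ 0 with h | h | h
  · have h1 : ⌊v⌋ ≤ -1 := by omega
    have h2 : (|⌊v⌋| - 1).toNat = (-⌊v⌋ - 1).toNat := by
      rw [abs_of_neg h]
    have h3 : v < ⌊v⌋ + 1 := Int.lt_floor_add_one v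
    have h4 : v < 0 := by
      have : ((⌊v⌋ : ℝ) + 1) ≤ 0 := by exact_mod_cast (by omega : ⌊v⌋ + 1 ≤ 0)
      linarith
    rw [h2, abs_of_neg h4]
    have h5 : ((( -⌊v⌋ - 1).toNat : ℕ) : ℝ) = -(⌊v⌋:ℝ) - 1 := by
      have : (0:ℤ) ≤ -⌊v⌋ - 1 := by omega
      rw [← Int.cast_natCast, Int.toNat_of_nonneg this]
      push_cast; ring
    rw [h5]
    linarith
  · rw [h]; simp [abs_nonneg]
  · have h1 : 1 ≤ ⌊v⌋ := h
    have h2 : (|⌊v⌋| - 1).toNat = (⌊v⌋ - 1).toNat := by rw [abs_of_pos h]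
    have h3 : (⌊v⌋ : ℝ) ≤ v := Int.floor_le v
    have h4 : (0:ℝ) < v := by
      have : (1:ℝ) ≤ (⌊v⌋:ℝ) := by exact_mod_cast h1
      linarith
    rw [h2, abs_of_pos h4]
    have h5 : (((⌊v⌋ - 1).toNat : ℕ) : ℝ) = (⌊v⌋:ℝ) - 1 := by
      have : (0:ℤ) ≤ ⌊v⌋ - 1 := by omega
      rw [← Int.cast_natCast, Int.toNat_of_nonneg this]
      push_cast; ring
    rw [h5]
    linarith

lemma aux_coord_sum (p : ℝ≥0∞) [hp : Fact (1 ≤ p)] (hpt : p ≠ ∞)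
    (x : lp (fun _ : ℕ => ℝ) p) (hx : ‖x‖ ≤ 1) (d : ℕ) :
    ∑ i ∈ Finset.range d, |x i| ^ p.toReal ≤ 1 := by
  have hpR1 : 1 ≤ p.toReal := by
    have := ENNReal.toReal_mono hpt hp.out
    simpa using this
  have hpR0 : 0 < p.toReal := lt_of_lt_of_le one_pos hpR1
  have hsummable : Summable fun i => ‖(x : ∀ _ : ℕ, ℝ) i‖ ^ p.toReal :=
    (memℓp_gen_iff hpR0).1 (lp.memℓp x)
  have heq : ∑ i ∈ Finset.range d, |x i| ^ p.toReal
      = ∑ i ∈ Finset.range d, ‖(x : ∀ _ : ℕ, ℝ) i‖ ^ p.toReal := by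
    apply Finset.sum_congr rfl
    intro i _
    rw [Real.norm_eq_abs]
  rw [heq]
  have h2 := Summable.sum_le_tsum (Finset.range d)
    (fun i _ => Real.rpow_nonneg (norm_nonneg _) _) hsummable
  have h3 : ∑' i, ‖(x : ∀ _ : ℕ, ℝ) i‖ ^ p.toReal = ‖x‖ ^ p.toReal := by
    rw [lp.norm_eq_tsum_rpow hpR0 x, ← Real.rpow_mul
      (tsum_nonneg fun i => Real.rpow_nonneg (norm_nonneg _) _)]
    rw [one_div, inv_mul_cancel₀ hpR0.ne', Real.rpow_one]
  calc ∑ i ∈ Finset.range d, ‖(x : ∀ _ : ℕ, ℝ) i‖ ^ p.toReal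
      ≤ ∑' i, ‖(x : ∀ _ : ℕ, ℝ) i‖ ^ p.toReal := h2
    _ = ‖x‖ ^ p.toReal := h3
    _ ≤ 1 := Real.rpow_le_one (norm_nonneg x) hx hpR0.le

set_option maxHeartbeats 2000000 in
/-- **Theorem 1 (upper bound for `p < q`).**
Let `1 ≤ p < q ≤ ∞` with `1/p = 1/q + 1/s`, and let `σ` be a non-increasing sequence of
positive reals tending to zero (here `σ k` denotes the `(k+1)`-st term `σ_{k+1}` of the
paper).  Then the entropy numbers of the diagonal operator `D_σ : ℓ_p → ℓ_q` satisfy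
`e_n(D_σ) ≤ C ⬝ sup_{k ≥ 1} k^{-1/s} ((σ_1 + k^{1/s} σ_k)⋯(σ_k + k^{1/s} σ_k)/n)^{1/k}`. -/
theorem statement0 (p q s : ℝ≥0∞) [Fact (1 ≤ p)] [Fact (1 ≤ q)]
    (hpq : p < q) (hs : 1 / p = 1 / q + 1 / s)
    (σ : ℕ → ℝ) (hσpos : ∀ k, 0 < σ k) (hσanti : Antitone σ)
    (hσlim : Tendsto σ atTop (nhds 0))
    (D : lp (fun _ : ℕ => ℝ) p →L[ℝ] lp (fun _ : ℕ => ℝ) q)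
    (hD : ∀ (x : lp (fun _ : ℕ => ℝ) p) (k : ℕ), D x k = σ k * x k) :
    ∃ C : ℝ, 0 < C ∧ ∀ n : ℕ, 1 ≤ n →
      entropyNumber n (D '' Metric.closedBall 0 1) ≤
        C * ⨆ k : ℕ,
          (k + 1 : ℝ) ^ (-(1 / s).toReal) *
            ((∏ i ∈ Finset.range (k + 1),
                (σ i + (k + 1 : ℝ) ^ (1 / s).toReal * σ k)) / n) ^ (1 / (k + 1 : ℝ)) := by
  classical
  have hp1 : (1:ℝ≥0∞) ≤ p := Fact.out
  have hq1 : (1:ℝ≥0∞) ≤ q := Fact.out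
  have hpt : p ≠ ∞ := (lt_of_lt_of_le hpq le_top).ne
  have hp0 : p ≠ 0 := by
    intro h; rw [h] at hp1; exact absurd hp1 (by simp)
  have hq0 : q ≠ 0 := by
    intro h; rw [h] at hq1; exact absurd hq1 (by simp)
  have hpR1 : 1 ≤ p.toReal := by simpa using ENNReal.toReal_mono hpt hp1
  have hpR0 : 0 < p.toReal := lt_of_lt_of_le one_pos hpR1
  have hsfin : 1/s ≠ ∞ := by
    intro h
    have h1 : (1:ℝ≥0∞)/p = ∞ := by rw [hs, h]; simp
    rw [one_div, ENNReal.inv_eq_top] at h1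
    exact hp0 h1
  have hqfin : 1/q ≠ ∞ := by
    rw [one_div, Ne, ENNReal.inv_eq_top]
    exact hq0
  have hs0 : 1/s ≠ 0 := by
    intro h
    rw [h, add_zero] at hs
    have : p = q := by
      rw [one_div, one_div] at hs
      exact inv_inj.1 hs
    exact hpq.ne this
  set rr : ℝ := (1/s).toReal with hrr
  have hrpos : 0 < rr := ENNReal.toReal_pos hs0 hsfin
  have hsplit : (1/p).toReal = (1/q).toReal + rr := by
    rw [hs, ENNReal.toReal_add hqfin hsfin]
  have hpI : (1/p).toReal = 1/p.toReal := by
    rw [one_div, one_div, ENNReal.toReal_inv]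
  have hqIt : (1/q).toReal = 1/p.toReal - rr := by
    rw [← hpI, hsplit]; ring
  refine ⟨26, by norm_num, ?_⟩
  intro n hn
  have hn0 : (0:ℝ) < n := by exact_mod_cast hn
  have hn1 : (1:ℝ) ≤ n := by exact_mod_cast hn
  set T : ℕ → ℝ := fun k => (k + 1 : ℝ) ^ (-rr) *
    ((∏ i ∈ Finset.range (k + 1), (σ i + (k + 1 : ℝ) ^ rr * σ k)) / (n:ℝ)) ^ (1 / (k + 1 : ℝ))
    with hT
  show entropyNumber n (D '' Metric.closedBall 0 1) ≤ 26 * ⨆ k, T k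
  have hTpos : ∀ k, 0 < T k := by
    intro k
    rw [hT]
    have hk1 : (0:ℝ) < (k:ℝ) + 1 := by positivity
    apply mul_pos (Real.rpow_pos_of_pos hk1 _)
    apply Real.rpow_pos_of_pos
    apply div_pos _ hn0
    apply Finset.prod_pos
    intro i _
    have h2 : (0:ℝ) < ((k:ℝ)+1) ^ rr := Real.rpow_pos_of_pos hk1 _
    nlinarith [hσpos i, hσpos k]
  have hTbdd : BddAbove (Set.range T) := by
    refine ⟨2 * σ 0, ?_⟩
    rintro - ⟨k, rfl⟩
    rw [hT]
    have hk1 : (0:ℝ) < (k:ℝ) + 1 := by positivity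
    have hA : (0:ℝ) < ((k:ℝ)+1) ^ rr := Real.rpow_pos_of_pos hk1 _
    have hA1 : (1:ℝ) ≤ ((k:ℝ)+1) ^ rr := by
      apply Real.one_le_rpow _ hrpos.le
      have : (0:ℝ) ≤ (k:ℝ) := Nat.cast_nonneg k
      linarith
    have hPp : (0:ℝ) ≤ ∏ i ∈ Finset.range (k+1), (σ i + ((k:ℝ)+1) ^ rr * σ k) := by
      apply Finset.prod_nonneg
      intro i _
      nlinarith [hσpos i, hσpos k]
    have hP : ∏ i ∈ Finset.range (k+1), (σ i + ((k:ℝ)+1) ^ rr * σ k)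
        ≤ (((k:ℝ)+1) ^ rr * (2 * σ 0)) ^ (k+1) := by
      have hcst : (((k:ℝ)+1) ^ rr * (2 * σ 0)) ^ (k+1)
          = ∏ _i ∈ Finset.range (k+1), (((k:ℝ)+1) ^ rr * (2 * σ 0)) := by
        rw [Finset.prod_const, Finset.card_range]
      rw [hcst]
      apply Finset.prod_le_prod
      · intro i _; nlinarith [hσpos i, hσpos k]
      · intro i _
        have e1 : σ i ≤ σ 0 := hσanti (Nat.zero_le i)
        have e2 : σ k ≤ σ 0 := hσanti (Nat.zero_le k)
        nlinarith [hσpos 0]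
    have hPn : (∏ i ∈ Finset.range (k+1), (σ i + ((k:ℝ)+1) ^ rr * σ k)) / n
        ≤ (((k:ℝ)+1) ^ rr * (2 * σ 0)) ^ (k+1) :=
      le_trans (div_le_self hPp hn1) hP
    have hXnn : (0:ℝ) ≤ ((k:ℝ)+1) ^ rr * (2 * σ 0) := by
      nlinarith [hσpos 0]
    have hroot : ((∏ i ∈ Finset.range (k+1), (σ i + ((k:ℝ)+1) ^ rr * σ k)) / n)
        ^ (1/((k:ℝ)+1)) ≤ ((k:ℝ)+1) ^ rr * (2 * σ 0) := by
      have h1 : ((∏ i ∈ Finset.range (k+1), (σ i + ((k:ℝ)+1) ^ rr * σ k)) / n)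
          ^ (1/((k:ℝ)+1))
          ≤ ((((k:ℝ)+1) ^ rr * (2 * σ 0)) ^ (k+1 : ℕ)) ^ (1/((k:ℝ)+1)) :=
        Real.rpow_le_rpow (by positivity) hPn (by positivity)
      have h2 : ((((k:ℝ)+1) ^ rr * (2 * σ 0)) ^ (k+1 : ℕ)) ^ (1/((k:ℝ)+1))
          = ((k:ℝ)+1) ^ rr * (2 * σ 0) := by
        rw [← Real.rpow_natCast (((k:ℝ)+1) ^ rr * (2 * σ 0)) (k+1),
          ← Real.rpow_mul hXnn]
        rw [show ((k+1 : ℕ):ℝ) * (1/((k:ℝ)+1)) = 1 by push_cast; field_simp]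
        exact Real.rpow_one _
      rw [h2] at h1
      exact h1
    calc ((k:ℝ) + 1) ^ (-rr) *
        ((∏ i ∈ Finset.range (k + 1), (σ i + ((k:ℝ) + 1) ^ rr * σ k)) / n) ^ (1/((k:ℝ)+1))
        ≤ ((k:ℝ) + 1) ^ (-rr) * (((k:ℝ)+1) ^ rr * (2 * σ 0)) :=
          mul_le_mul_of_nonneg_left hroot (Real.rpow_nonneg hk1.le _)
      _ = 2 * σ 0 := by
          rw [Real.rpow_neg hk1.le, ← mul_assoc, inv_mul_cancel₀ hA.ne', one_mul]
  have hTsk : ∀ k, T k ≤ ⨆ k, T k := fun k => le_ciSup hTbdd k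
  have hTs_pos : 0 < ⨆ k, T k := lt_of_lt_of_le (hTpos 0) (hTsk 0)
  set Ts : ℝ := ⨆ k, T k with hTsdef
  have h17 : (0:ℝ) < 17 * Ts := by nlinarith
  have hex : ∃ j, σ j < 17 * Ts := (hσlim.eventually (Iio_mem_nhds h17)).exists
  obtain ⟨d, hdlt, hdmin⟩ : ∃ d, σ d < 17 * Ts ∧ ∀ j, j < d → 17 * Ts ≤ σ j :=
    ⟨Nat.find hex, Nat.find_spec hex, fun j hj => not_lt.1 (Nat.find_min hex hj)⟩
  rcases Nat.eq_zero_or_pos d with hd0 | hd0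
  -- Case A : one ball of radius σ 0 suffices
  · subst hd0
    have hcover : D '' Metric.closedBall 0 1 ⊆
        ⋃ y' ∈ ({(0 : lp (fun _ : ℕ => ℝ) q)} : Finset (lp (fun _ : ℕ => ℝ) q)),
          Metric.closedBall y' (σ 0) := by
      rintro - ⟨x, hx, rfl⟩
      have hx1 : ‖x‖ ≤ 1 := by rwa [mem_closedBall, dist_zero_right] at hx
      refine Set.mem_iUnion₂.2 ⟨0, Finset.mem_singleton_self _, ?_⟩
      rw [mem_closedBall, dist_zero_right]
      have hb := aux_norm_le p q hpt hpq.le x hx1 (D x) 0 0 (σ 0) le_rfl (hσpos 0).le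
        (fun i hi => absurd hi (Nat.not_lt_zero i))
        (fun i _ => by
          rw [hD x i, abs_mul, abs_of_pos (hσpos i)]
          exact mul_le_mul_of_nonneg_right (hσanti (Nat.zero_le i)) (abs_nonneg _))
      simpa using hb
    have hent := aux_entropy_le n hn (D '' Metric.closedBall 0 1) (σ 0) (hσpos 0)
      {0} (by simpa using hn) hcover
    refine le_trans hent ?_
    nlinarith [hTs_pos]
  -- Case B
  · obtain ⟨d', rfl⟩ : ∃ d', d = d' + 1 := ⟨d - 1, by omega⟩
    have hσd' : 17 * Ts ≤ σ d' := hdmin d' (by omega)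
    set dR : ℝ := (d' : ℝ) + 1 with hdR
    have hdR0 : (0:ℝ) < dR := by positivity
    have hdcast : ((d' + 1 : ℕ) : ℝ) = dR := by rw [hdR]; push_cast; ring
    set ε : ℝ := 17 * dR ^ (rr - 1/p.toReal) * Ts with hε
    have hεpos : 0 < ε := by
      have h1 := Real.rpow_pos_of_pos hdR0 (rr - 1/p.toReal)
      rw [hε]; nlinarith
    have hkey1 : dR ^ (1/p.toReal) * ε = 17 * dR ^ rr * Ts := by
      rw [hε, show dR ^ (1/p.toReal) * (17 * dR ^ (rr - 1/p.toReal) * Ts)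
        = 17 * (dR ^ (1/p.toReal) * dR ^ (rr - 1/p.toReal)) * Ts by ring,
        ← Real.rpow_add hdR0, show 1/p.toReal + (rr - 1/p.toReal) = rr by ring]
    have hkey2 : ε * dR ^ (1/q).toReal = 17 * Ts := by
      rw [hε, hqIt, show 17 * dR ^ (rr - 1/p.toReal) * Ts * dR ^ (1/p.toReal - rr)
        = 17 * (dR ^ (rr - 1/p.toReal) * dR ^ (1/p.toReal - rr)) * Ts by ring,
        ← Real.rpow_add hdR0, show (rr - 1/p.toReal) + (1/p.toReal - rr) = 0 by ring,
        Real.rpow_zero, mul_one]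
    -- centers
    set c : (Fin (d'+1) → ℤ) → (ℕ → ℝ) := fun m i =>
      if h : i < d' + 1 then ((m ⟨i, h⟩ : ℝ) + 1/2) * ε else 0 with hc
    have hcmem : ∀ m, Memℓp (c m) q := by
      intro m
      apply aux_memℓp q hq1 _ (d'+1)
      intro i hi
      rw [hc]
      exact dif_neg (not_lt.2 hi)
    set y : (Fin (d'+1) → ℤ) → lp (fun _ : ℕ => ℝ) q := fun m => ⟨c m, hcmem m⟩ with hy
    set KK : ℤ := ⌈σ 0 / ε⌉ + 1 with hKK
    set M : Finset (Fin (d'+1) → ℤ) :=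
      (Fintype.piFinset fun _ : Fin (d'+1) => Finset.Icc (-KK) KK).filter
        (fun m => ∃ x : lp (fun _ : ℕ => ℝ) p, ‖x‖ ≤ 1 ∧
          ∀ i : Fin (d'+1), m i = ⌊σ i * x i / ε⌋) with hM
    have hfloor : ∀ a : ℝ, |a - ((⌊a/ε⌋ : ℝ) + 1/2) * ε| ≤ ε/2 := by
      intro a
      have h1 : (⌊a/ε⌋ : ℝ) ≤ a/ε := Int.floor_le _
      have h2 : a/ε < ⌊a/ε⌋ + 1 := Int.lt_floor_add_one _
      have h1' : (⌊a/ε⌋ : ℝ) * ε ≤ a := by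
        have := mul_le_mul_of_nonneg_right h1 hεpos.le
        rwa [div_mul_cancel₀ _ hεpos.ne'] at this
      have h2' : a < ((⌊a/ε⌋ : ℝ) + 1) * ε := by
        have := mul_lt_mul_of_pos_right h2 hεpos
        rwa [div_mul_cancel₀ _ hεpos.ne'] at this
      rw [abs_le]
      constructor <;> nlinarith
    have hxcoord : ∀ (x : lp (fun _ : ℕ => ℝ) p), ‖x‖ ≤ 1 → ∀ i : ℕ, |x i| ≤ 1 := by
      intro x hx1 i
      have := lp.norm_apply_le_norm hp0 x i
      rw [Real.norm_eq_abs] at this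
      exact le_trans this hx1
    set ρ : ℝ := ε/2 * ((d'+1 : ℕ) : ℝ) ^ (1/q).toReal + σ (d'+1) with hρ
    have hρpos : 0 < ρ := by
      rw [hρ]
      have h1 : (0:ℝ) < ((d'+1 : ℕ) : ℝ) ^ (1/q).toReal :=
        Real.rpow_pos_of_pos (by positivity) _
      nlinarith [hσpos (d'+1)]
    -- covering property
    have hcover : D '' Metric.closedBall 0 1 ⊆
        ⋃ y' ∈ M.image y, Metric.closedBall y' ρ := by
      rintro - ⟨x, hx, rfl⟩
      have hx1 : ‖x‖ ≤ 1 := by rwa [mem_closedBall, dist_zero_right] at hx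
      set m : Fin (d'+1) → ℤ := fun i => ⌊σ i * x i / ε⌋ with hm
      have habs : ∀ i : Fin (d'+1), |σ i * x i| ≤ σ 0 := by
        intro i
        rw [abs_mul, abs_of_pos (hσpos i)]
        calc σ (i:ℕ) * |x i| ≤ σ (i:ℕ) * 1 :=
              mul_le_mul_of_nonneg_left (hxcoord x hx1 i) (hσpos i).le
          _ ≤ σ 0 := by rw [mul_one]; exact hσanti (Nat.zero_le _)
      have hmM : m ∈ M := by
        rw [hM, Finset.mem_filter]
        refine ⟨?_, x, hx1, fun i => rfl⟩
        rw [Fintype.mem_piFinset]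
        intro i
        rw [Finset.mem_Icc]
        have hceil : σ 0 / ε ≤ (⌈σ 0 / ε⌉ : ℝ) := Int.le_ceil _
        have hdiv1 : σ i * x i / ε ≤ σ 0 / ε :=
          (div_le_div_iff_of_pos_right hεpos).2 (le_trans (le_abs_self _) (habs i))
        have hdiv2 : -(σ 0 / ε) ≤ σ i * x i / ε := by
          rw [← neg_div]
          exact (div_le_div_iff_of_pos_right hεpos).2 (le_trans (neg_le_neg (habs i)) (neg_abs_le _))
        have hfl : (m i : ℝ) ≤ σ i * x i / ε := Int.floor_le _
        have hfl2 : σ i * x i / ε - 1 < (m i : ℝ) := Int.sub_one_lt_floor _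
        have hKKr : (KK : ℝ) = (⌈σ 0 / ε⌉ : ℝ) + 1 := by rw [hKK]; push_cast; ring
        constructor
        · have h9 : ((-KK : ℤ) : ℝ) ≤ ((m i : ℤ) : ℝ) := by
            push_cast [hKK]
            linarith
          exact_mod_cast h9
        · have h9 : ((m i : ℤ) : ℝ) ≤ ((KK : ℤ) : ℝ) := by
            push_cast [hKK]
            linarith
          exact_mod_cast h9
      refine Set.mem_iUnion₂.2 ⟨y m, Finset.mem_image_of_mem y hmM, ?_⟩
      rw [mem_closedBall, dist_eq_norm]
      rw [hρ]
      apply aux_norm_le p q hpt hpq.le x hx1 (D x - y m) (d'+1) (ε/2) (σ (d'+1))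
        (by positivity) (hσpos (d'+1)).le
      · intro i hi
        have hco : ((D x - y m : lp (fun _ : ℕ => ℝ) q) : ∀ _ : ℕ, ℝ) i
            = σ i * x i - ((m ⟨i, hi⟩ : ℝ) + 1/2) * ε := by
          rw [lp.coeFn_sub, Pi.sub_apply, hD x i]
          congr 1
          show c m i = _
          rw [hc]
          simp only
          rw [dif_pos hi]
        rw [hco]
        have : m ⟨i, hi⟩ = ⌊σ i * x i / ε⌋ := rfl
        rw [this]
        exact hfloor (σ i * x i)
      · intro i hi
        have hco : ((D x - y m : lp (fun _ : ℕ => ℝ) q) : ∀ _ : ℕ, ℝ) i = σ i * x i := by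
          rw [lp.coeFn_sub, Pi.sub_apply, hD x i]
          have : c m i = 0 := by rw [hc]; simp only; rw [dif_neg (not_lt.2 hi)]
          show σ i * x i - c m i = σ i * x i
          rw [this, sub_zero]
        rw [hco, abs_mul, abs_of_pos (hσpos i)]
        exact mul_le_mul_of_nonneg_right (hσanti hi) (abs_nonneg _)
    -- cardinality bound
    have hcardR : (M.card : ℝ) ≤ n := by
      set b : Fin (d'+1) → ℝ := fun i => ε / (dR ^ (1 - 1/p.toReal) * σ i) with hb
      have hbpos : ∀ i, 0 < b i := by
        intro i
        rw [hb]
        exact div_pos hεpos (mul_pos (Real.rpow_pos_of_pos hdR0 _) (hσpos i))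
      have hcount := aux_count (d'+1) (by omega) b hbpos M ?_
      · -- chain from the count to n
        refine le_trans hcount ?_
        have hdbi : ∀ i : Fin (d'+1), ((d'+1 : ℕ) : ℝ) * b i = (17 * dR ^ rr * Ts) / σ i := by
          intro i
          rw [hb, hdcast]
          rw [show dR * (ε / (dR ^ (1 - 1/p.toReal) * σ (i:ℕ)))
            = (dR / dR ^ (1 - 1/p.toReal)) * (ε / σ (i:ℕ)) by ring]
          rw [show dR / dR ^ (1 - 1/p.toReal) = dR ^ (1/p.toReal) by
            rw [div_eq_iff (ne_of_gt (Real.rpow_pos_of_pos hdR0 (1 - 1/p.toReal))),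
              ← Real.rpow_add hdR0, show 1/p.toReal + (1 - 1/p.toReal) = 1 by ring,
              Real.rpow_one]]
          rw [← hkey1]
          field_simp
        have haxis : ∀ i : Fin (d'+1),
            6 * Real.exp 1 * (1 + 1 / (((d'+1 : ℕ) : ℝ) * b i))
              ≤ (σ i + dR ^ rr * σ d') / (dR ^ rr * Ts) := by
          intro i
          rw [hdbi i]
          have hA : (0:ℝ) < dR ^ rr := Real.rpow_pos_of_pos hdR0 _
          have hσi : 17 * Ts ≤ σ i := le_trans hσd' (hσanti (by omega : (i:ℕ) ≤ d'))
          have he : Real.exp 1 < 2.7182818286 := Real.exp_one_lt_d9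
          have he0 : 0 < Real.exp 1 := Real.exp_pos 1
          set v : ℝ := σ (i:ℕ) / (dR ^ rr * Ts) with hv
          have hv0 : 0 ≤ v := by
            rw [hv]
            exact div_nonneg (hσpos _).le (mul_pos hA hTs_pos).le
          have hWT : 17 ≤ σ d' / Ts := by
            rw [le_div_iff₀ hTs_pos]; linarith
          have hRHS : (σ (i:ℕ) + dR ^ rr * σ d') / (dR ^ rr * Ts) = v + σ d' / Ts := by
            rw [hv]
            field_simp
          have hLHS : 1 / (17 * dR ^ rr * Ts / σ (i:ℕ)) = v / 17 := by
            rw [one_div_div, hv]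
            rw [eq_div_iff (by norm_num : (17:ℝ) ≠ 0)]
            field_simp
          rw [hRHS, hLHS]
          nlinarith [hσpos (i:ℕ)]
        calc ∏ i, (6 * Real.exp 1 * (1 + 1 / (((d'+1 : ℕ) : ℝ) * b i)))
            ≤ ∏ i : Fin (d'+1), ((σ (i:ℕ) + dR ^ rr * σ d') / (dR ^ rr * Ts)) := by
              apply Finset.prod_le_prod
              · intro i _
                have h1 : 0 < ((d'+1 : ℕ) : ℝ) * b i := by
                  apply mul_pos _ (hbpos i)
                  positivity
                have h2 : (0:ℝ) < 1 + 1 / (((d'+1 : ℕ) : ℝ) * b i) := by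
                  have := one_div_pos.2 h1
                  linarith
                positivity
              · intro i _
                exact haxis i
          _ = (∏ i ∈ Finset.range (d'+1), (σ i + dR ^ rr * σ d')) / (dR ^ rr * Ts)^(d'+1) := by
              rw [Finset.prod_div_distrib, Finset.prod_const, Finset.card_univ,
                Fintype.card_fin]
              congr 1
              exact Fin.prod_univ_eq_prod_range (fun i => σ i + dR ^ rr * σ d') (d'+1)
          _ ≤ n := by
              have hA : (0:ℝ) < dR ^ rr := Real.rpow_pos_of_pos hdR0 _
              have hTd' : T d' = dR ^ (-rr) *
                  ((∏ i ∈ Finset.range (d'+1), (σ i + dR ^ rr * σ d')) / n) ^ (1/dR) := by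
                rw [hT, hdR]
              have hPpos : (0:ℝ) < ∏ i ∈ Finset.range (d'+1), (σ i + dR ^ rr * σ d') := by
                apply Finset.prod_pos
                intro i _
                nlinarith [hσpos i, hσpos d', hA]
              have h1 : dR ^ rr * T d' =
                  ((∏ i ∈ Finset.range (d'+1), (σ i + dR ^ rr * σ d')) / n) ^ (1/dR) := by
                rw [hTd', ← mul_assoc, ← Real.rpow_add hdR0,
                  show rr + -rr = 0 by ring, Real.rpow_zero, one_mul]
              have h2 : (dR ^ rr * T d') ^ (d'+1) =
                  (∏ i ∈ Finset.range (d'+1), (σ i + dR ^ rr * σ d')) / n := by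
                rw [h1, ← Real.rpow_natCast
                  (((∏ i ∈ Finset.range (d'+1), (σ i + dR ^ rr * σ d')) / n) ^ (1/dR)) (d'+1),
                  ← Real.rpow_mul (by positivity)]
                rw [show (1/dR) * ((d'+1:ℕ):ℝ) = 1 by
                  rw [hdcast]; field_simp]
                exact Real.rpow_one _
              have hP_eq : (∏ i ∈ Finset.range (d'+1), (σ i + dR ^ rr * σ d'))
                  = n * (dR ^ rr * T d') ^ (d'+1) := by
                rw [h2]
                field_simp
              rw [hP_eq]
              have hnum : (dR ^ rr * T d') ^ (d'+1) ≤ (dR ^ rr * Ts) ^ (d'+1) := by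
                apply pow_le_pow_left₀ (mul_nonneg hA.le (hTpos d').le)
                exact mul_le_mul_of_nonneg_left (hTsk d') hA.le
              have hden : (0:ℝ) < (dR ^ rr * Ts) ^ (d'+1) := pow_pos (mul_pos hA hTs_pos) _
              rw [div_le_iff₀ hden]
              exact mul_le_mul_of_nonneg_left hnum hn0.le
      · -- the count hypothesis
        intro m hm
        rw [hM, Finset.mem_filter] at hm
        obtain ⟨-, x, hx1, hmx⟩ := hm
        have hper : ∀ i : Fin (d'+1), (((|m i| - 1).toNat : ℕ) : ℝ) * b i
            ≤ |x (i:ℕ)| / dR ^ (1 - 1/p.toReal) := by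
          intro i
          have h1 : (((|m i| - 1).toNat : ℕ) : ℝ) ≤ |σ (i:ℕ) * x (i:ℕ)| / ε := by
            rw [hmx i]
            have h0 := aux_floor_abs (σ (i:ℕ) * x (i:ℕ) / ε)
            rwa [abs_div, abs_of_pos hεpos] at h0
          have hM1 : (0:ℝ) < dR ^ (1 - 1/p.toReal) := Real.rpow_pos_of_pos hdR0 _
          have h2 : |σ (i:ℕ) * x (i:ℕ)| = σ (i:ℕ) * |x (i:ℕ)| := by
            rw [abs_mul, abs_of_pos (hσpos (i:ℕ))]
          rw [hb]
          calc (((|m i| - 1).toNat : ℕ) : ℝ) * (ε / (dR ^ (1 - 1/p.toReal) * σ (i:ℕ)))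
              ≤ (|σ (i:ℕ) * x (i:ℕ)| / ε) * (ε / (dR ^ (1 - 1/p.toReal) * σ (i:ℕ))) :=
                mul_le_mul_of_nonneg_right h1
                  (le_of_lt (div_pos hεpos (mul_pos hM1 (hσpos (i:ℕ)))))
            _ = |x (i:ℕ)| / dR ^ (1 - 1/p.toReal) := by
                rw [h2]
                field_simp [hεpos.ne', hM1.ne', (hσpos (i:ℕ)).ne']
        have hsum : ∑ i : Fin (d'+1), |x (i:ℕ)| ≤ dR ^ (1 - 1/p.toReal) := by
          have hh := aux_holder (d'+1) (by omega) hpR1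
            (fun i : Fin (d'+1) => |x (i:ℕ)|) (fun i => abs_nonneg _)
          have hcs : ∑ i : Fin (d'+1), |x (i:ℕ)| ^ p.toReal ≤ 1 := by
            rw [Fin.sum_univ_eq_sum_range (fun i => |x i| ^ p.toReal) (d'+1)]
            exact aux_coord_sum p hpt x hx1 (d'+1)
          have hrt : (∑ i : Fin (d'+1), |x (i:ℕ)| ^ p.toReal) ^ (1/p.toReal) ≤ 1 :=
            Real.rpow_le_one
              (Finset.sum_nonneg fun i _ => Real.rpow_nonneg (abs_nonneg _) _) hcs
              (by positivity)
          calc ∑ i : Fin (d'+1), |x (i:ℕ)|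
              ≤ ((d'+1:ℕ):ℝ) ^ (1 - 1/p.toReal)
                  * (∑ i : Fin (d'+1), |x (i:ℕ)| ^ p.toReal) ^ (1/p.toReal) := hh
            _ ≤ ((d'+1:ℕ):ℝ) ^ (1 - 1/p.toReal) * 1 :=
                mul_le_mul_of_nonneg_left hrt (Real.rpow_nonneg (by positivity) _)
            _ = dR ^ (1 - 1/p.toReal) := by rw [mul_one, hdcast]
        calc ∑ i, (((|m i| - 1).toNat : ℕ) : ℝ) * b i
            ≤ ∑ i : Fin (d'+1), |x (i:ℕ)| / dR ^ (1 - 1/p.toReal) :=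
              Finset.sum_le_sum (fun i _ => hper i)
          _ = (∑ i : Fin (d'+1), |x (i:ℕ)|) / dR ^ (1 - 1/p.toReal) := by
              rw [Finset.sum_div]
          _ ≤ 1 := by
              rw [div_le_one (Real.rpow_pos_of_pos hdR0 _)]
              exact hsum
    -- conclude
    have hcardN : (M.image y).card ≤ n := by
      have h1 : M.card ≤ n := by exact_mod_cast hcardR
      exact le_trans Finset.card_image_le h1
    have hent := aux_entropy_le n hn (D '' Metric.closedBall 0 1) ρ hρpos
      (M.image y) hcardN hcover
    refine le_trans hent ?_
    rw [hρ, hdcast]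
    have hq2 : ε/2 * dR ^ (1/q).toReal = 17 * Ts / 2 := by
      rw [show ε/2 * dR ^ (1/q).toReal = (ε * dR ^ (1/q).toReal)/2 by ring, hkey2]
    rw [hq2]
    linarith [hdlt, hTs_pos]
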